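/- arXiv:1606.00728 — 3 statements merged into one kernel-verified Lean document; each statement's English description precedes it below -/
import Mathlib

section
/- Let X, Y, Z be Hilbert spaces, T : X → Y a bounded linear operator, and S : X → Z a bounded injective linear operator. If T is compact, then for every ε > 0 there exists C_ε > 0 such that ‖Tu‖²_Y ≤ ε‖u‖²_X + C_ε‖Su‖²_Z for all u ∈ X. -/
open InnerProductSpace Filter Metric
open scoped Topology ComplexConjugate

local notation "⟪" x ", " y "⟫" => @inner ℂ _ _ x y

/-- If `T : X → Y` is compact and `S : X → Z` is bounded and injective, then for every
`ε > 0` there is `C_ε > 0` with `‖Tu‖² ≤ ε‖u‖² + C_ε‖Su‖²` for all `u`. -/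
theorem stmt9
    {X Y Z : Type*}
    [NormedAddCommGroup X] [InnerProductSpace ℂ X] [CompleteSpace X]
    [NormedAddCommGroup Y] [InnerProductSpace ℂ Y] [CompleteSpace Y]
    [NormedAddCommGroup Z] [InnerProductSpace ℂ Z] [CompleteSpace Z]
    (T : X →L[ℂ] Y) (S : X →L[ℂ] Z) (hS : Function.Injective S)
    (hT : IsCompactOperator T) :
    ∀ ε > (0 : ℝ), ∃ C > (0 : ℝ), ∀ u : X,
      ‖T u‖ ^ 2 ≤ ε * ‖u‖ ^ 2 + C * ‖S u‖ ^ 2 := by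
  intro ε hε
  by_contra h
  push_neg at h
  -- build a normalized sequence violating the estimate with constants `n+1`
  have hw : ∀ n : ℕ, ∃ w : X, ‖w‖ = 1 ∧ ε + (n + 1 : ℝ) * ‖S w‖ ^ 2 < ‖T w‖ ^ 2 := by
    intro n
    obtain ⟨u, hu⟩ := h (n + 1 : ℝ) (by positivity)
    have hu0 : u ≠ 0 := by
      rintro rfl
      simp at hu
    have hn : (0 : ℝ) < ‖u‖ := norm_pos_iff.mpr hu0
    refine ⟨‖u‖⁻¹ • u, ?_, ?_⟩
    · simp [norm_smul, abs_of_pos (inv_pos.mpr hn), inv_mul_cancel₀ hn.ne']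
    · have h1 : ‖T (‖u‖⁻¹ • u)‖ = ‖u‖⁻¹ * ‖T u‖ := by
        rw [ContinuousLinearMap.map_smul_of_tower, norm_smul, norm_inv, norm_norm]
      have h2 : ‖S (‖u‖⁻¹ • u)‖ = ‖u‖⁻¹ * ‖S u‖ := by
        rw [ContinuousLinearMap.map_smul_of_tower, norm_smul, norm_inv, norm_norm]
      rw [h1, h2]
      have hinv : ‖u‖⁻¹ * ‖u‖ = 1 := inv_mul_cancel₀ hn.ne'
      have hipos : (0 : ℝ) < ‖u‖⁻¹ := inv_pos.mpr hn
      have key := mul_lt_mul_of_pos_left hu (mul_pos hipos hipos)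
      have hinv2 : ‖u‖⁻¹ * ‖u‖⁻¹ * ‖u‖ ^ 2 = 1 := by
        field_simp
      nlinarith [key, hinv2, hε, sq_nonneg ‖S u‖]
  choose w hw1 hw2 using hw
  -- basic bounds
  have hTb : ∀ n, ‖T (w n)‖ ≤ ‖T‖ := fun n => by
    simpa [hw1 n] using T.le_opNorm (w n)
  have hεT : ∀ n, ε ≤ ‖T (w n)‖ ^ 2 := fun n => by
    nlinarith [hw2 n, sq_nonneg ‖S (w n)‖, Nat.cast_nonneg (α := ℝ) n]
  -- S (w n) → 0
  have hSw : Tendsto (fun n => S (w n)) atTop (𝓝 0) := by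
    rw [tendsto_zero_iff_norm_tendsto_zero]
    have hbound : ∀ n : ℕ, ‖S (w n)‖ ≤ Real.sqrt (‖T‖ ^ 2 / (n + 1)) := by
      intro n
      have h1 : ‖S (w n)‖ ^ 2 ≤ ‖T‖ ^ 2 / (n + 1) := by
        rw [le_div_iff₀ (by positivity : (0 : ℝ) < (n : ℝ) + 1)]
        nlinarith [hw2 n, hTb n, norm_nonneg (T (w n)), T.opNorm_nonneg]
      calc ‖S (w n)‖ = Real.sqrt (‖S (w n)‖ ^ 2) := by
            rw [Real.sqrt_sq (norm_nonneg _)]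
        _ ≤ Real.sqrt (‖T‖ ^ 2 / (n + 1)) := Real.sqrt_le_sqrt h1
    refine squeeze_zero (fun n => norm_nonneg _) hbound ?_
    have : Tendsto (fun n : ℕ => ‖T‖ ^ 2 / ((n : ℝ) + 1)) atTop (𝓝 0) := by
      apply Tendsto.div_atTop tendsto_const_nhds
      exact tendsto_atTop_add_const_right _ _ tendsto_natCast_atTop_atTop
    simpa using this.sqrt
  -- fix an ultrafilter extending atTop
  let U : Ultrafilter ℕ := Ultrafilter.of atTop
  have hU : (U : Filter ℕ) ≤ atTop := Ultrafilter.of_le atTop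
  -- use compactness of T to get a strong limit of T (w n) along U
  obtain ⟨K, hK, hTK⟩ := hT
  obtain ⟨r, hr, hball⟩ := Metric.mem_nhds_iff.mp hTK
  have hmem : ∀ n, T ((r / 2) • w n) ∈ K := by
    intro n
    apply hball
    simp only [mem_ball, dist_zero_right, norm_smul, hw1 n, mul_one]
    rw [Real.norm_eq_abs, abs_of_pos (by positivity)]
    linarith
  obtain ⟨y, -, hy⟩ := hK.ultrafilter_le_nhds (U.map fun n => T ((r / 2) • w n))
    (by simp only [Ultrafilter.coe_map, le_principal_iff, Filter.mem_map]
        exact univ_mem' hmem)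
  rw [Ultrafilter.coe_map] at hy
  have hyT : Tendsto (fun n => T ((r / 2) • w n)) U (𝓝 y) := hy
  have hy' : Tendsto (fun n => T (w n)) U (𝓝 ((r / 2)⁻¹ • y)) := by
    have h2 : Tendsto (fun n => (r / 2)⁻¹ • T ((r / 2) • w n)) U (𝓝 ((r / 2)⁻¹ • y)) :=
      hyT.const_smul _
    convert h2 using 2 with n
    rw [ContinuousLinearMap.map_smul_of_tower, smul_smul,
      inv_mul_cancel₀ (by positivity : (r / 2 : ℝ) ≠ 0), one_smul]
  set y' : Y := (r / 2)⁻¹ • y with hy'def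
  -- ε ≤ ‖y'‖²
  have hεy : ε ≤ ‖y'‖ ^ 2 := by
    have : Tendsto (fun n => ‖T (w n)‖ ^ 2) U (𝓝 (‖y'‖ ^ 2)) := (hy'.norm).pow 2
    exact ge_of_tendsto' this hεT
  -- Banach-Alaoglu: weak-* cluster point of toDual (w n)
  let φ : ℕ → WeakDual ℂ X := fun n => (toDual ℂ X (w n) : StrongDual ℂ X)
  have hφmem : ∀ n, φ n ∈ WeakDual.toStrongDual ⁻¹' closedBall 0 1 := by
    intro n
    simp only [Set.mem_preimage, mem_closedBall, dist_zero_right]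
    show ‖toDual ℂ X (w n)‖ ≤ 1
    rw [(toDual ℂ X).norm_map, hw1 n]
  obtain ⟨ψ, -, hψ⟩ := (WeakDual.isCompact_closedBall (0 : StrongDual ℂ X)
      1).ultrafilter_le_nhds (U.map φ)
    (by simp only [Ultrafilter.coe_map, le_principal_iff, Filter.mem_map]
        exact univ_mem' hφmem)
  rw [Ultrafilter.coe_map] at hψ
  have hψT : Tendsto φ U (𝓝 ψ) := hψ
  have hψ' : ∀ x : X, Tendsto (fun n => ⟪w n, x⟫) U (𝓝 (ψ x)) := by
    intro x
    have := (tendsto_iff_forall_eval_tendsto_topDualPairing.mp hψT) x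
    simp [φ, toDual_apply_apply] at this
    exact this
  -- identify ψ with an element u of X, show u = 0
  set u : X := (toDual ℂ X).symm (WeakDual.toStrongDual ψ) with hudef
  have hux : ∀ x : X, ⟪u, x⟫ = ψ x := fun x => toDual_symm_apply
  have hSu : S u = 0 := by
    have h1 : ∀ z : Z, ⟪S u, z⟫ = 0 := by
      intro z
      have h2 : Tendsto (fun n => ⟪w n, (ContinuousLinearMap.adjoint S) z⟫) U
          (𝓝 (ψ ((ContinuousLinearMap.adjoint S) z))) := hψ' _
      have h3 : Tendsto (fun n => ⟪S (w n), z⟫) U (𝓝 (0 : ℂ)) := by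
        have := Filter.Tendsto.inner (𝕜 := ℂ) (hSw.mono_left hU)
          (tendsto_const_nhds (x := z))
        simpa using this
      have h4 : (fun n => ⟪w n, (ContinuousLinearMap.adjoint S) z⟫)
          = fun n => ⟪S (w n), z⟫ := by
        funext n; rw [ContinuousLinearMap.adjoint_inner_right]
      rw [h4] at h2
      have h5 : ψ ((ContinuousLinearMap.adjoint S) z) = 0 := tendsto_nhds_unique h2 h3
      calc ⟪S u, z⟫ = ⟪u, (ContinuousLinearMap.adjoint S) z⟫ := by
            rw [ContinuousLinearMap.adjoint_inner_right]
        _ = ψ ((ContinuousLinearMap.adjoint S) z) := hux _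
        _ = 0 := h5
    have := h1 (S u)
    rwa [inner_self_eq_zero] at this
  have hu0 : u = 0 := hS (by rw [hSu, map_zero])
  have hψ0 : ∀ x : X, ψ x = 0 := by
    intro x
    rw [← hux x, hu0, inner_zero_left]
  -- conclude y' = 0, contradiction
  have hyy : ⟪y', y'⟫ = 0 := by
    have h2 : Tendsto (fun n => ⟪T (w n), y'⟫) U (𝓝 ⟪y', y'⟫) :=
      Filter.Tendsto.inner hy' tendsto_const_nhds
    have h3 : (fun n => ⟪T (w n), y'⟫)
        = fun n => ⟪w n, (ContinuousLinearMap.adjoint T) y'⟫ := by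
      funext n; rw [ContinuousLinearMap.adjoint_inner_right]
    rw [h3] at h2
    have h4 : Tendsto (fun n => ⟪w n, (ContinuousLinearMap.adjoint T) y'⟫) U
        (𝓝 (ψ ((ContinuousLinearMap.adjoint T) y'))) := hψ' _
    rw [tendsto_nhds_unique h2 h4, hψ0]
  rw [inner_self_eq_zero] at hyy
  rw [hyy] at hεy
  simp at hεy
  linarith
end

section
/- Let X, Y be Hilbert spaces and T : X → Y a bounded linear operator. Assume that for every ε > 0 there exist a Hilbert space Z_ε, a compact linear operator S_ε : X → Z_ε, and a constant C_ε > 0 such that ‖Tu‖²_Y ≤ ε‖u‖²_X + C_ε‖S_ε u‖²_{Z_ε} for all u ∈ X. Then T is compact. -/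
/-- If `T : X → Y` is bounded and for every `ε > 0` there are a Hilbert space `Z_ε`, a compact
operator `S_ε : X → Z_ε`, and `C_ε > 0` with `‖Tu‖² ≤ ε‖u‖² + C_ε‖S_ε u‖²` for all `u`,
then `T` is compact. -/
theorem stmt10
    {X Y : Type*}
    [NormedAddCommGroup X] [InnerProductSpace ℂ X] [CompleteSpace X]
    [NormedAddCommGroup Y] [InnerProductSpace ℂ Y] [CompleteSpace Y]
    (T : X →L[ℂ] Y)
    (h : ∀ ε > (0 : ℝ), ∃ (Z : Type) (_ : NormedAddCommGroup Z) (_ : InnerProductSpace ℂ Z)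
      (_ : CompleteSpace Z) (Sε : X →L[ℂ] Z) (C : ℝ), 0 < C ∧ IsCompactOperator Sε ∧
      ∀ u : X, ‖T u‖ ^ 2 ≤ ε * ‖u‖ ^ 2 + C * ‖Sε u‖ ^ 2) :
    IsCompactOperator T := by
  have key : IsCompactOperator (T : X →ₗ[ℂ] Y) := by
    rw [isCompactOperator_iff_isCompact_closure_image_closedBall (𝕜₁ := ℂ)
      (T : X →ₗ[ℂ] Y) (zero_lt_one (α := ℝ))]
    refine TotallyBounded.isCompact_of_isClosed ?_ isClosed_closure
    refine TotallyBounded.closure ?_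
    rw [Metric.totallyBounded_iff]
    intro r hr
    obtain ⟨Z, _, _, _, S, C, hC, hS, hest⟩ := h (r ^ 2 / 8) (by positivity)
    have hSTB : TotallyBounded (⇑S '' Metric.closedBall 0 1) :=
      ((hS.isCompact_closure_image_closedBall (𝕜₁ := ℂ) 1).totallyBounded).subset
        subset_closure
    have hsC : (0:ℝ) < Real.sqrt C := Real.sqrt_pos.mpr hC
    set δ : ℝ := r / (2 * Real.sqrt C) with hδdef
    have hδ : 0 < δ := by positivity
    obtain ⟨t, hts, htf, hcov⟩ :=
      totallyBounded_iff_subset.mp hSTB _ (Metric.dist_mem_uniformity hδ)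
    have : Finite t := htf.to_subtype
    choose g hg1 hg2 using fun z : t => hts z.2
    refine ⟨Set.range (fun z : t => (T : X →ₗ[ℂ] Y) (g z)), Set.finite_range _, ?_⟩
    rintro y ⟨u, hu, rfl⟩
    obtain ⟨z, hz, hzu⟩ := Set.mem_iUnion₂.mp (hcov ⟨u, hu, rfl⟩)
    have hdist : dist (S u) z < δ := hzu
    simp only [Set.mem_iUnion, Metric.mem_ball, Set.mem_range]
    refine ⟨_, ⟨⟨z, hz⟩, rfl⟩, ?_⟩
    have h1 : ‖T (u - g ⟨z, hz⟩)‖ ^ 2 ≤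
        r ^ 2 / 8 * ‖u - g ⟨z, hz⟩‖ ^ 2 + C * ‖S (u - g ⟨z, hz⟩)‖ ^ 2 := hest _
    have h2 : ‖u - g ⟨z, hz⟩‖ ≤ 2 := by
      have hu1 : ‖u‖ ≤ 1 := by simpa using hu
      have hg1' : ‖g ⟨z, hz⟩‖ ≤ 1 := by simpa using hg1 ⟨z, hz⟩
      calc ‖u - g ⟨z, hz⟩‖ ≤ ‖u‖ + ‖g ⟨z, hz⟩‖ := norm_sub_le _ _
        _ ≤ 2 := by linarith
    have h3 : ‖S (u - g ⟨z, hz⟩)‖ < δ := by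
      rw [map_sub]
      rw [hg2 ⟨z, hz⟩, ← dist_eq_norm]
      exact hdist
    have hCδ : C * δ ^ 2 = r ^ 2 / 4 := by
      rw [hδdef]
      field_simp
      rw [Real.sq_sqrt hC.le]
      ring
    have hTnorm : ‖T (u - g ⟨z, hz⟩)‖ ^ 2 < r ^ 2 := by
      have hn2 : (0:ℝ) ≤ ‖u - g ⟨z, hz⟩‖ := norm_nonneg _
      have hn3 : (0:ℝ) ≤ ‖S (u - g ⟨z, hz⟩)‖ := norm_nonneg _
      have h4 : C * ‖S (u - g ⟨z, hz⟩)‖ ^ 2 ≤ C * δ ^ 2 :=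
        mul_le_mul_of_nonneg_left (by nlinarith : ‖S (u - g ⟨z, hz⟩)‖ ^ 2 ≤ δ ^ 2) hC.le
      have h5 : ‖u - g ⟨z, hz⟩‖ ^ 2 ≤ 4 := by nlinarith
      have h6 : r ^ 2 / 8 * ‖u - g ⟨z, hz⟩‖ ^ 2 ≤ r ^ 2 / 8 * 4 := by nlinarith [sq_nonneg r]
      nlinarith [sq_nonneg r, hr]
    have : ‖T u - T (g ⟨z, hz⟩)‖ < r := by
      have := lt_of_pow_lt_pow_left₀ 2 hr.le (by simpa [map_sub] using hTnorm)
      exact this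
    rw [dist_eq_norm]
    simpa using this
  exact key
end

section
/- Let 1 ≤ q ≤ n and let A be an n×n Hermitian matrix. The following are equivalent: (i) for every (0,q)-multi-index array (w_J)_{|J|=q} of complex numbers (indexed by strictly increasing q-tuples J from {1,...,n}, extended antisymmetrically to all q-tuples), one has ∑'_{|K|=q-1} ∑_{j,k=1}^n A_{jk} w_{jK} \overline{w_{kK}} ≥ c ∑'_{|J|=q} |w_J|²; (ii) the sum of the q smallest eigenvalues of A is at least c. -/
open scoped Classical

open Matrix

namespace Stmt14

open Finset

variable {n : ℕ}

/-- Alternating array condition. -/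
def Alt {m : ℕ} (w : (Fin m → Fin n) → ℂ) : Prop :=
  (∀ (J : Fin m → Fin n) (σ : Equiv.Perm (Fin m)),
      w (J ∘ σ) = ((Equiv.Perm.sign σ : ℤ) : ℂ) * w J) ∧
  (∀ J : Fin m → Fin n, ¬ Function.Injective J → w J = 0)

/-- Slotwise transform of an array by a matrix. -/
noncomputable def tr {m : ℕ} (B : Matrix (Fin n) (Fin n) ℂ) (w : (Fin m → Fin n) → ℂ) :
    (Fin m → Fin n) → ℂ :=
  fun M => ∑ J : Fin m → Fin n, (∏ t, B (M t) (J t)) * w J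

lemma tr_tr {m : ℕ} (B C : Matrix (Fin n) (Fin n) ℂ) (w : (Fin m → Fin n) → ℂ) :
    tr B (tr C w) = tr (B * C) w := by
  funext M
  simp only [tr, Finset.mul_sum, Finset.sum_mul]
  rw [Finset.sum_comm]
  refine Finset.sum_congr rfl fun N _ => ?_
  have h : ∏ t, (B * C) (M t) (N t)
      = ∑ J : Fin m → Fin n, ∏ t, (B (M t) (J t) * C (J t) (N t)) := by
    simp only [Matrix.mul_apply]
    rw [Finset.prod_univ_sum, Fintype.piFinset_univ]
  rw [h, Finset.sum_mul]
  refine Finset.sum_congr rfl fun J _ => ?_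
  rw [Finset.prod_mul_distrib]
  ring

lemma tr_one {m : ℕ} (w : (Fin m → Fin n) → ℂ) : tr 1 w = w := by
  funext M
  simp only [tr, Matrix.one_apply]
  rw [Fintype.sum_eq_single M]
  · simp
  · intro J hJ
    have : ¬ ∀ t ∈ Finset.univ, M t = J t := by
      intro h
      exact hJ (funext fun t => (h t (Finset.mem_univ t)).symm)
    rw [Finset.prod_boole, if_neg this, zero_mul]

lemma alt_tr {m : ℕ} (B : Matrix (Fin n) (Fin n) ℂ) {w : (Fin m → Fin n) → ℂ}
    (hw : Alt w) : Alt (tr B w) := by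
  have hperm : ∀ (M : Fin m → Fin n) (σ : Equiv.Perm (Fin m)),
      tr B w (M ∘ σ) = ((Equiv.Perm.sign σ : ℤ) : ℂ) * tr B w M := by
    intro M σ
    unfold tr
    rw [Finset.mul_sum]
    rw [← Fintype.sum_bijective (fun J : Fin m → Fin n => J ∘ σ)
      (Equiv.arrowCongr σ.symm (Equiv.refl (Fin n))).bijective _ _ (fun J => rfl)]
    refine Finset.sum_congr rfl fun J _ => ?_
    rw [hw.1 J σ]
    have : ∏ t, B ((M ∘ σ) t) ((J ∘ σ) t) = ∏ t, B (M t) (J t) := Equiv.prod_comp σ fun t => B (M t) (J t)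
    rw [this]; ring
  refine ⟨hperm, fun M hM => ?_⟩
  simp only [Function.Injective, not_forall] at hM
  obtain ⟨i, j, hij, hne⟩ := hM
  have hMs : M ∘ (Equiv.swap i j) = M := by
    funext t
    simp only [Function.comp_apply]
    rcases eq_or_ne t i with rfl | hti
    · rw [Equiv.swap_apply_left]; exact hij.symm
    rcases eq_or_ne t j with rfl | htj
    · rw [Equiv.swap_apply_right]; exact hij
    · rw [Equiv.swap_apply_of_ne_of_ne hti htj]
  have := hperm M (Equiv.swap i j)
  rw [hMs, Equiv.Perm.sign_swap hne] at this
  push_cast at this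
  have h2 : (2 : ℂ) * tr B w M = 0 := by linear_combination this
  simpa using h2

/-- Summing a symmetric, alternating-supported function over all tuples equals `m!` times
the sum over strictly increasing tuples. -/
lemma sum_factorial {M : Type*} [AddCommMonoid M] {m : ℕ} (f : (Fin m → Fin n) → M)
    (hsymm : ∀ (J : Fin m → Fin n) (σ : Equiv.Perm (Fin m)), f (J ∘ σ) = f J)
    (hzero : ∀ J : Fin m → Fin n, ¬ Function.Injective J → f J = 0) :
    ∑ J : Fin m → Fin n, f J =
      m.factorial • ∑ J ∈ Finset.univ.filter (fun J : Fin m → Fin n => StrictMono J), f J := by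
  have hcard : ∀ J : Fin m → Fin n, (m.factorial) • f J = ∑ σ : Equiv.Perm (Fin m), f (J ∘ σ) := by
    intro J
    rw [Finset.sum_congr rfl fun σ _ => hsymm J σ, Finset.sum_const, Finset.card_univ,
      Fintype.card_perm, Fintype.card_fin]
  rw [Finset.smul_sum, Finset.sum_congr rfl fun J _ => hcard J, ← Finset.sum_product']
  rw [← Finset.sum_filter_of_ne (p := fun J : Fin m → Fin n => Function.Injective J)
    (fun J _ h => by by_contra hni; exact h (hzero J hni))]
  refine (Finset.sum_bij (fun (p : (Fin m → Fin n) × Equiv.Perm (Fin m)) _ => p.1 ∘ p.2)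
    ?_ ?_ ?_ ?_).symm
  · rintro ⟨J, σ⟩ hp
    rw [Finset.mem_product, Finset.mem_filter] at hp
    rw [Finset.mem_filter]
    exact ⟨Finset.mem_univ _, hp.1.2.injective.comp σ.injective⟩
  · rintro ⟨J₁, σ₁⟩ h₁ ⟨J₂, σ₂⟩ h₂ heq
    rw [Finset.mem_product, Finset.mem_filter] at h₁ h₂
    have heq' : J₁ ∘ ⇑σ₁ = J₂ ∘ ⇑σ₂ := heq
    have hr : Set.range (J₁ ∘ ⇑σ₁) = Set.range (J₂ ∘ ⇑σ₂) := by rw [heq']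
    rw [Set.range_comp, Set.range_comp] at hr
    simp only [Equiv.range_eq_univ, Set.image_univ] at hr
    have hwf : WellFoundedLT (Fin m) := inferInstance
    have hJ : J₁ = J₂ := (h₁.1.2.range_inj h₂.1.2).1 hr
    subst hJ
    have hσ : σ₁ = σ₂ := Equiv.ext fun t => h₁.1.2.injective (congrFun heq' t)
    rw [hσ]
  · intro J hJmem
    rw [Finset.mem_filter] at hJmem
    have hJ : Function.Injective J := hJmem.2
    set s₀ := Finset.image J Finset.univ with hs₀
    have hc : s₀.card = m := by
      rw [hs₀, Finset.card_image_of_injective _ hJ, Finset.card_univ, Fintype.card_fin]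
    have hmemJ : ∀ t, J t ∈ s₀ := fun t => Finset.mem_image_of_mem _ (Finset.mem_univ t)
    set σf : Fin m → Fin m := fun t => (s₀.orderIsoOfFin hc).symm ⟨J t, hmemJ t⟩ with hσf
    have hσinj : Function.Injective σf := by
      intro a b hab
      have hab' : ((s₀.orderIsoOfFin hc).symm ⟨J a, hmemJ a⟩)
          = (s₀.orderIsoOfFin hc).symm ⟨J b, hmemJ b⟩ := hab
      have := (s₀.orderIsoOfFin hc).symm.injective hab'
      exact hJ (Subtype.mk_eq_mk.mp this)
    refine ⟨⟨⇑(s₀.orderEmbOfFin hc), Equiv.ofBijective σf (Finite.injective_iff_bijective.mp hσinj)⟩,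
      ?_, ?_⟩
    · rw [Finset.mem_product, Finset.mem_filter]
      exact ⟨⟨Finset.mem_univ _, (s₀.orderEmbOfFin hc).strictMono⟩, Finset.mem_univ _⟩
    · funext t
      show s₀.orderEmbOfFin hc (σf t) = J t
      rw [hσf]
      rw [← Finset.coe_orderIsoOfFin_apply]
      simp
  · intro p _
    rfl

lemma entry_one (U : Matrix (Fin n) (Fin n) ℂ) (hU : U * star U = 1) (a b : Fin n) :
    (∑ x, U a x * (starRingEnd ℂ) (U b x)) = if a = b then 1 else 0 := by
  have h1 : (U * star U) a b = (1 : Matrix (Fin n) (Fin n) ℂ) a b := by rw [hU]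
  simpa [Matrix.mul_apply, Matrix.one_apply, Matrix.star_apply] using h1

/-- Plancherel: the transform by a matrix with `B * Bᴴ = 1`-type unitarity preserves norms. -/
lemma plancherel {m : ℕ} (U : Matrix (Fin n) (Fin n) ℂ) (hU : U * star U = 1)
    (w : (Fin m → Fin n) → ℂ) :
    ∑ M : Fin m → Fin n, Complex.normSq (tr Uᵀ w M) = ∑ J : Fin m → Fin n, Complex.normSq (w J) := by
  have hone := entry_one U hU
  have main : ∑ M : Fin m → Fin n, tr Uᵀ w M * (starRingEnd ℂ) (tr Uᵀ w M)
      = ∑ J : Fin m → Fin n, w J * (starRingEnd ℂ) (w J) := by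
    have e1 : ∀ M : Fin m → Fin n, tr Uᵀ w M * (starRingEnd ℂ) (tr Uᵀ w M)
        = ∑ J : Fin m → Fin n, ∑ J' : Fin m → Fin n,
            (∏ t, (U (J t) (M t) * (starRingEnd ℂ) (U (J' t) (M t))))
              * (w J * (starRingEnd ℂ) (w J')) := by
      intro M
      rw [tr, map_sum, Finset.sum_mul_sum]
      refine Finset.sum_congr rfl fun J _ => Finset.sum_congr rfl fun J' _ => ?_
      rw [Finset.prod_mul_distrib]
      simp only [Matrix.transpose_apply, map_prod, RingHom.map_mul]
      ring
    rw [Finset.sum_congr rfl fun M _ => e1 M, Finset.sum_comm]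
    rw [Finset.sum_congr rfl fun J _ => Finset.sum_comm]
    have e2 : ∀ J J' : Fin m → Fin n,
        (∑ M : Fin m → Fin n, ∏ t, (U (J t) (M t) * (starRingEnd ℂ) (U (J' t) (M t))))
          = if J = J' then 1 else 0 := by
      intro J J'
      rw [← Fintype.piFinset_univ, ← Finset.prod_univ_sum (fun _ => (Finset.univ : Finset (Fin n)))
        (fun t j => U (J t) j * (starRingEnd ℂ) (U (J' t) j))]
      have : ∀ t, (∑ j, U (J t) j * (starRingEnd ℂ) (U (J' t) j))
          = if J t = J' t then 1 else 0 := fun t => hone _ _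
      rw [Finset.prod_congr rfl fun t _ => this t, Finset.prod_boole]
      congr 1
      simp [funext_iff]
    have e3 : ∀ J : Fin m → Fin n, ∀ J' : Fin m → Fin n,
        (∑ M : Fin m → Fin n, (∏ t, (U (J t) (M t) * (starRingEnd ℂ) (U (J' t) (M t))))
              * (w J * (starRingEnd ℂ) (w J')))
        = (if J = J' then 1 else 0) * (w J * (starRingEnd ℂ) (w J')) := by
      intro J J'
      rw [← Finset.sum_mul, e2]
    rw [Finset.sum_congr rfl fun J _ => Finset.sum_congr rfl fun J' _ => e3 J J']
    refine Finset.sum_congr rfl fun J _ => ?_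
    simp
  simp only [Complex.mul_conj] at main
  exact_mod_cast main

set_option maxHeartbeats 1000000 in
/-- The key spectral identity. -/
lemma key {q' : ℕ} (A U : Matrix (Fin n) (Fin n) ℂ) (lam : Fin n → ℝ)
    (hU : U * star U = 1)
    (hAe : ∀ a b, A a b = ∑ m, U a m * ((lam m : ℝ) : ℂ) * (starRingEnd ℂ) (U b m))
    (w : (Fin (q' + 1) → Fin n) → ℂ) :
    ∑ M : Fin (q' + 1) → Fin n,
        (((lam (M 0) : ℝ) : ℂ)) * (tr Uᵀ w M * (starRingEnd ℂ) (tr Uᵀ w M))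
      = ∑ K : Fin q' → Fin n, ∑ j, ∑ k,
          A j k * w (Fin.cons j K) * (starRingEnd ℂ) (w (Fin.cons k K)) := by
  have hone := entry_one U hU
  have e1 : ∀ M : Fin (q' + 1) → Fin n,
      (((lam (M 0) : ℝ) : ℂ)) * (tr Uᵀ w M * (starRingEnd ℂ) (tr Uᵀ w M))
      = ∑ J : Fin (q' + 1) → Fin n, ∑ J' : Fin (q' + 1) → Fin n,
          ((((lam (M 0) : ℝ) : ℂ)) * ∏ t, (U (J t) (M t) * (starRingEnd ℂ) (U (J' t) (M t))))
            * (w J * (starRingEnd ℂ) (w J')) := by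
    intro M
    rw [tr, map_sum, Finset.sum_mul_sum, Finset.mul_sum]
    refine Finset.sum_congr rfl fun J _ => ?_
    rw [Finset.mul_sum]
    refine Finset.sum_congr rfl fun J' _ => ?_
    rw [Finset.prod_mul_distrib]
    simp only [Matrix.transpose_apply, map_prod, RingHom.map_mul]
    ring
  rw [Finset.sum_congr rfl fun M _ => e1 M, Finset.sum_comm]
  rw [Finset.sum_congr rfl fun J _ => Finset.sum_comm]
  have e2 : ∀ J J' : Fin (q' + 1) → Fin n,
      (∑ M : Fin (q' + 1) → Fin n,
          (((lam (M 0) : ℝ) : ℂ)) * ∏ t, (U (J t) (M t) * (starRingEnd ℂ) (U (J' t) (M t))))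
        = A (J 0) (J' 0) * (if Fin.tail J = Fin.tail J' then 1 else 0) := by
    intro J J'
    have hg : ∀ M : Fin (q' + 1) → Fin n,
        (((lam (M 0) : ℝ) : ℂ)) * ∏ t, (U (J t) (M t) * (starRingEnd ℂ) (U (J' t) (M t)))
        = ∏ t, (Fin.cases (motive := fun _ => Fin n → ℂ)
            (fun j => ((lam j : ℝ) : ℂ) * (U (J 0) j * (starRingEnd ℂ) (U (J' 0) j)))
            (fun s (j : Fin n) => U (J s.succ) j * (starRingEnd ℂ) (U (J' s.succ) j)) t) (M t) := by
      intro M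
      rw [Fin.prod_univ_succ, Fin.prod_univ_succ]
      simp only [Fin.cases_zero, Fin.cases_succ]
      ring
    rw [Finset.sum_congr rfl fun M _ => hg M]
    rw [← Fintype.piFinset_univ, ← Finset.prod_univ_sum (fun _ => (Finset.univ : Finset (Fin n)))
      (fun t j => (Fin.cases (motive := fun _ => Fin n → ℂ)
            (fun j => ((lam j : ℝ) : ℂ) * (U (J 0) j * (starRingEnd ℂ) (U (J' 0) j)))
            (fun s (j : Fin n) => U (J s.succ) j * (starRingEnd ℂ) (U (J' s.succ) j)) t) j)]
    rw [Fin.prod_univ_succ]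
    simp only [Fin.cases_zero, Fin.cases_succ]
    congr 1
    · rw [hAe]
      refine Finset.sum_congr rfl fun m _ => ?_
      ring
    · have h5 : ∀ s : Fin q', (∑ j, U (J s.succ) j * (starRingEnd ℂ) (U (J' s.succ) j))
          = if J s.succ = J' s.succ then 1 else 0 := fun s => hone _ _
      rw [Finset.prod_congr rfl fun s _ => h5 s, Finset.prod_boole]
      congr 1
      simp only [eq_iff_iff]
      constructor
      · intro h
        funext s
        exact h s (Finset.mem_univ s)
      · intro h s _
        exact congrFun h s
  have e3 : ∀ J J' : Fin (q' + 1) → Fin n,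
      (∑ M : Fin (q' + 1) → Fin n,
          ((((lam (M 0) : ℝ) : ℂ)) * ∏ t, (U (J t) (M t) * (starRingEnd ℂ) (U (J' t) (M t))))
            * (w J * (starRingEnd ℂ) (w J')))
      = (A (J 0) (J' 0) * (if Fin.tail J = Fin.tail J' then 1 else 0))
          * (w J * (starRingEnd ℂ) (w J')) := by
    intro J J'
    rw [← Finset.sum_mul, e2]
  rw [Finset.sum_congr rfl fun J _ => Finset.sum_congr rfl fun J' _ => e3 J J']
  have hce : ∀ p : Fin n × (Fin q' → Fin n),
      (Fin.consEquiv (fun _ : Fin (q' + 1) => Fin n)) p = Fin.cons p.1 p.2 := fun _ => rfl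
  rw [← Equiv.sum_comp (Fin.consEquiv (fun _ : Fin (q' + 1) => Fin n))
      (fun J => ∑ J' : Fin (q' + 1) → Fin n,
        (A (J 0) (J' 0) * (if Fin.tail J = Fin.tail J' then 1 else 0))
          * (w J * (starRingEnd ℂ) (w J')))]
  rw [Fintype.sum_prod_type, Finset.sum_comm]
  refine Finset.sum_congr rfl fun K _ => Finset.sum_congr rfl fun j _ => ?_
  simp only [hce, Fin.cons_zero, Fin.tail_cons]
  rw [← Equiv.sum_comp (Fin.consEquiv (fun _ : Fin (q' + 1) => Fin n))
      (fun J' => (A j (J' 0) * (if K = Fin.tail J' then 1 else 0))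
          * (w (Fin.cons j K) * (starRingEnd ℂ) (w J')))]
  rw [Fintype.sum_prod_type]
  refine Finset.sum_congr rfl fun k _ => ?_
  simp only [hce, Fin.cons_zero, Fin.tail_cons]
  rw [Finset.sum_eq_single K]
  · rw [if_pos rfl]; ring
  · intro K' _ hK'
    rw [if_neg (fun h => hK' h.symm)]
    ring
  · intro h
    exact absurd (Finset.mem_univ K) h

lemma inner_symm {q' : ℕ} (A : Matrix (Fin n) (Fin n) ℂ) {w : (Fin (q' + 1) → Fin n) → ℂ}
    (hw : Alt w) (K : Fin q' → Fin n) (σ : Equiv.Perm (Fin q')) :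
    (∑ j, ∑ k, A j k * w (Fin.cons j (K ∘ σ)) * (starRingEnd ℂ) (w (Fin.cons k (K ∘ σ))))
      = ∑ j, ∑ k, A j k * w (Fin.cons j K) * (starRingEnd ℂ) (w (Fin.cons k K)) := by
  have hτ : ∀ (j : Fin n), Fin.cons j (K ∘ σ)
      = (Fin.cons j K) ∘ (Equiv.Perm.decomposeFin.symm (0, σ)) := by
    intro j; funext t
    refine Fin.cases ?_ (fun s => ?_) t
    · simp [Equiv.Perm.decomposeFin_symm_apply_zero]
    · simp [Equiv.Perm.decomposeFin_symm_apply_succ]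
  refine Finset.sum_congr rfl fun j _ => Finset.sum_congr rfl fun k _ => ?_
  rw [hτ j, hτ k, hw.1 _ _, hw.1 _ _]
  set c : ℂ := ((Equiv.Perm.sign (Equiv.Perm.decomposeFin.symm ((0 : Fin (q' + 1)), σ)) : ℤ) : ℂ)
    with hc
  have hcc : c * (starRingEnd ℂ) c = 1 := by
    rcases Int.units_eq_one_or (Equiv.Perm.sign (Equiv.Perm.decomposeFin.symm
      ((0 : Fin (q' + 1)), σ))) with h | h <;> rw [hc, h] <;> simp
  calc A j k * (c * w (Fin.cons j K)) * (starRingEnd ℂ) (c * w (Fin.cons k K))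
      = (c * (starRingEnd ℂ) c) * (A j k * w (Fin.cons j K) * (starRingEnd ℂ) (w (Fin.cons k K)))
        := by rw [RingHom.map_mul]; ring
    _ = A j k * w (Fin.cons j K) * (starRingEnd ℂ) (w (Fin.cons k K)) := by rw [hcc, one_mul]

lemma inner_zero {q' : ℕ} (A : Matrix (Fin n) (Fin n) ℂ) {w : (Fin (q' + 1) → Fin n) → ℂ}
    (hw : Alt w) (K : Fin q' → Fin n) (hK : ¬ Function.Injective K) :
    (∑ j, ∑ k, A j k * w (Fin.cons j K) * (starRingEnd ℂ) (w (Fin.cons k K))) = 0 := by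
  have h0 : ∀ j, w (Fin.cons j K) = 0 := by
    intro j
    refine hw.2 _ (fun hinj => hK ?_)
    intro a b hab
    have h1 : (Fin.cons j K : Fin (q' + 1) → Fin n) a.succ
        = (Fin.cons j K : Fin (q' + 1) → Fin n) b.succ := by
      simpa [Fin.cons_succ] using hab
    exact Fin.succ_injective _ (hinj h1)
  simp [h0]

lemma normSq_sign_mul {m : ℕ} (σ : Equiv.Perm (Fin m)) (z : ℂ) :
    Complex.normSq (((Equiv.Perm.sign σ : ℤ) : ℂ) * z) = Complex.normSq z := by
  rcases Int.units_eq_one_or (Equiv.Perm.sign σ) with h | h <;> rw [h] <;> simp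

lemma slot_symm {q' : ℕ} {v : (Fin (q' + 1) → Fin n) → ℂ} (hv : Alt v) (lam : Fin n → ℝ) :
    ∑ M : Fin (q' + 1) → Fin n, (∑ t, lam (M t)) * Complex.normSq (v M)
      = (q' + 1 : ℝ) * ∑ M : Fin (q' + 1) → Fin n, lam (M 0) * Complex.normSq (v M) := by
  have hslot : ∀ t : Fin (q' + 1),
      (∑ M : Fin (q' + 1) → Fin n, lam (M t) * Complex.normSq (v M))
        = ∑ M : Fin (q' + 1) → Fin n, lam (M 0) * Complex.normSq (v M) := by
    intro t
    refine Fintype.sum_bijective (fun M : Fin (q' + 1) → Fin n => M ∘ (Equiv.swap 0 t))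
      (Equiv.arrowCongr (Equiv.swap (0 : Fin (q' + 1)) t).symm (Equiv.refl (Fin n))).bijective
      _ _ (fun M => ?_)
    have h1 : (M ∘ (Equiv.swap (0 : Fin (q' + 1)) t)) 0 = M t := by
      simp [Equiv.swap_apply_left]
    have h2 : Complex.normSq (v (M ∘ (Equiv.swap (0 : Fin (q' + 1)) t)))
        = Complex.normSq (v M) := by
      rw [hv.1 M (Equiv.swap 0 t), normSq_sign_mul]
    show lam (M t) * Complex.normSq (v M)
      = lam ((M ∘ ⇑(Equiv.swap (0 : Fin (q' + 1)) t)) 0)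
          * Complex.normSq (v (M ∘ ⇑(Equiv.swap (0 : Fin (q' + 1)) t)))
    rw [h1, h2]
  calc ∑ M : Fin (q' + 1) → Fin n, (∑ t, lam (M t)) * Complex.normSq (v M)
      = ∑ M : Fin (q' + 1) → Fin n, ∑ t, lam (M t) * Complex.normSq (v M) := by
        refine Finset.sum_congr rfl fun M _ => ?_; rw [Finset.sum_mul]
    _ = ∑ t : Fin (q' + 1), ∑ M : Fin (q' + 1) → Fin n, lam (M t) * Complex.normSq (v M) :=
        Finset.sum_comm
    _ = ∑ _t : Fin (q' + 1), ∑ M : Fin (q' + 1) → Fin n, lam (M 0) * Complex.normSq (v M) :=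
        Finset.sum_congr rfl fun t _ => hslot t
    _ = (q' + 1 : ℝ) * ∑ M : Fin (q' + 1) → Fin n, lam (M 0) * Complex.normSq (v M) := by
        rw [Finset.sum_const, Finset.card_univ, Fintype.card_fin, nsmul_eq_mul]
        norm_num

lemma exists_alt {q' : ℕ} (s : Finset (Fin n)) (hs : s.card = q' + 1) (lam : Fin n → ℝ) :
    ∃ v : (Fin (q' + 1) → Fin n) → ℂ, Alt v ∧
      (∑ M : Fin (q' + 1) → Fin n, Complex.normSq (v M) = (q' + 1).factorial) ∧
      (∑ M : Fin (q' + 1) → Fin n, (∑ t, lam (M t)) * Complex.normSq (v M)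
        = (q' + 1).factorial * ∑ i ∈ s, lam i) := by
  set E : Fin (q' + 1) → Fin n := ⇑(s.orderEmbOfFin hs) with hE
  have hEinj : Function.Injective E := (s.orderEmbOfFin hs).injective
  set v : (Fin (q' + 1) → Fin n) → ℂ := fun M =>
    ∑ σ : Equiv.Perm (Fin (q' + 1)),
      if M = E ∘ σ then ((Equiv.Perm.sign σ : ℤ) : ℂ) else 0 with hv
  have hcomp_iff : ∀ (M : Fin (q' + 1) → Fin n) (τ σ : Equiv.Perm (Fin (q' + 1))),
      (M ∘ τ = E ∘ ⇑(σ * τ)) ↔ M = E ∘ σ := by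
    intro M τ σ
    constructor
    · intro h
      funext x
      have := congrFun h (τ⁻¹ x)
      simpa using this
    · intro h
      funext x
      simp [h]
  have hvperm : ∀ (M : Fin (q' + 1) → Fin n) (τ : Equiv.Perm (Fin (q' + 1))),
      v (M ∘ τ) = ((Equiv.Perm.sign τ : ℤ) : ℂ) * v M := by
    intro M τ
    have lhs_eq : v (M ∘ ⇑τ) = ∑ σ : Equiv.Perm (Fin (q' + 1)),
        if M ∘ ⇑τ = E ∘ ⇑σ then ((Equiv.Perm.sign σ : ℤ) : ℂ) else 0 := rfl
    have rhs_eq : v M = ∑ σ : Equiv.Perm (Fin (q' + 1)),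
        if M = E ∘ ⇑σ then ((Equiv.Perm.sign σ : ℤ) : ℂ) else 0 := rfl
    rw [lhs_eq, rhs_eq, Finset.mul_sum]
    rw [← Equiv.sum_comp (Equiv.mulRight τ)
      (fun σ => if M ∘ ⇑τ = E ∘ ⇑σ then ((Equiv.Perm.sign σ : ℤ) : ℂ) else 0)]
    refine Finset.sum_congr rfl fun σ _ => ?_
    have hmr : (Equiv.mulRight τ) σ = σ * τ := rfl
    rw [hmr]
    by_cases h : M = E ∘ σ
    · rw [if_pos ((hcomp_iff M τ σ).mpr h), if_pos h]
      rw [Equiv.Perm.sign_mul]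
      push_cast
      ring
    · rw [if_neg (fun hh => h ((hcomp_iff M τ σ).mp hh)), if_neg h, mul_zero]
  have hvE : ∀ σ : Equiv.Perm (Fin (q' + 1)), v (E ∘ σ) = ((Equiv.Perm.sign σ : ℤ) : ℂ) := by
    intro σ
    have lhs_eq : v (E ∘ ⇑σ) = ∑ σ' : Equiv.Perm (Fin (q' + 1)),
        if E ∘ ⇑σ = E ∘ ⇑σ' then ((Equiv.Perm.sign σ' : ℤ) : ℂ) else 0 := rfl
    rw [lhs_eq]
    have hiff : ∀ σ' : Equiv.Perm (Fin (q' + 1)), (E ∘ ⇑σ = E ∘ ⇑σ') ↔ σ' = σ := by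
      intro σ'
      constructor
      · intro h
        exact Equiv.ext fun x => (hEinj (congrFun h x)).symm
      · rintro rfl; rfl
    calc (∑ σ' : Equiv.Perm (Fin (q' + 1)),
        if E ∘ ⇑σ = E ∘ ⇑σ' then ((Equiv.Perm.sign σ' : ℤ) : ℂ) else 0)
        = ∑ σ' : Equiv.Perm (Fin (q' + 1)),
            if σ' = σ then ((Equiv.Perm.sign σ' : ℤ) : ℂ) else 0 := by
          refine Finset.sum_congr rfl fun σ' _ => ?_
          by_cases h : σ' = σ
          · rw [if_pos ((hiff σ').mpr h), if_pos h]
          · rw [if_neg (fun hh => h ((hiff σ').mp hh)), if_neg h]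
      _ = ((Equiv.Perm.sign σ : ℤ) : ℂ) := by
          rw [Finset.sum_ite_eq' Finset.univ σ
            (fun σ' => ((Equiv.Perm.sign σ' : ℤ) : ℂ))]
          rw [if_pos (Finset.mem_univ σ)]
  have hvz : ∀ M : Fin (q' + 1) → Fin n, (M ∉ Finset.image
      (fun σ : Equiv.Perm (Fin (q' + 1)) => E ∘ ⇑σ) Finset.univ) → v M = 0 := by
    intro M hM
    have lhs_eq : v M = ∑ σ : Equiv.Perm (Fin (q' + 1)),
        if M = E ∘ ⇑σ then ((Equiv.Perm.sign σ : ℤ) : ℂ) else 0 := rfl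
    rw [lhs_eq]
    refine Finset.sum_eq_zero fun σ _ => ?_
    rw [if_neg]
    intro h
    exact hM (Finset.mem_image.mpr ⟨σ, Finset.mem_univ σ, h.symm⟩)
  have hAlt : Alt v := by
    constructor
    · exact hvperm
    · intro M hM
      refine hvz M fun hmem => ?_
      obtain ⟨σ, _, hσ⟩ := Finset.mem_image.mp hmem
      rw [← hσ] at hM
      exact hM (hEinj.comp σ.injective)
  have hmain : ∀ g : (Fin (q' + 1) → Fin n) → ℝ,
      (∑ M : Fin (q' + 1) → Fin n, g M * Complex.normSq (v M))
        = ∑ σ : Equiv.Perm (Fin (q' + 1)), g (E ∘ ⇑σ) := by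
    intro g
    have hinj2 : ∀ x ∈ (Finset.univ : Finset (Equiv.Perm (Fin (q' + 1)))),
        ∀ y ∈ (Finset.univ : Finset (Equiv.Perm (Fin (q' + 1)))),
        (fun σ : Equiv.Perm (Fin (q' + 1)) => E ∘ ⇑σ) x
          = (fun σ : Equiv.Perm (Fin (q' + 1)) => E ∘ ⇑σ) y → x = y := by
      intro x _ y _ h
      exact Equiv.ext fun t => hEinj (congrFun h t)
    rw [← Finset.sum_subset (Finset.subset_univ (Finset.image
      (fun σ : Equiv.Perm (Fin (q' + 1)) => E ∘ ⇑σ) Finset.univ))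
      (fun M _ hM => by rw [hvz M hM]; simp)]
    rw [Finset.sum_image hinj2]
    refine Finset.sum_congr rfl fun σ _ => ?_
    rw [hvE σ]
    rcases Int.units_eq_one_or (Equiv.Perm.sign σ) with h | h <;> rw [h] <;> simp
  have himg : Finset.image E Finset.univ = s := by
    ext i
    simp only [Finset.mem_image, Finset.mem_univ, true_and]
    constructor
    · rintro ⟨t, rfl⟩
      exact s.orderEmbOfFin_mem hs t
    · intro hi
      have : i ∈ Set.range E := by rw [hE, Finset.range_orderEmbOfFin]; exact hi
      obtain ⟨t, ht⟩ := this
      exact ⟨t, ht⟩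
  refine ⟨v, hAlt, ?_, ?_⟩
  · have h1 : (∑ M : Fin (q' + 1) → Fin n, Complex.normSq (v M))
        = ∑ M : Fin (q' + 1) → Fin n, (fun _ => (1 : ℝ)) M * Complex.normSq (v M) := by
      simp
    rw [h1, hmain (fun _ => 1), Finset.sum_const, Finset.card_univ, Fintype.card_perm,
      Fintype.card_fin, nsmul_eq_mul, mul_one]
  · rw [hmain (fun M => ∑ t, lam (M t))]
    have h2 : ∀ σ : Equiv.Perm (Fin (q' + 1)),
        (∑ t, lam ((E ∘ ⇑σ) t)) = ∑ i ∈ s, lam i := by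
      intro σ
      have h3 : (∑ t, lam (E (σ t))) = ∑ t, lam (E t) :=
        Equiv.sum_comp σ (fun t => lam (E t))
      have h4 : (∑ t, lam (E t)) = ∑ i ∈ Finset.image E Finset.univ, lam i :=
        (Finset.sum_image (fun a _ b _ hab => hEinj hab)).symm
      calc (∑ t, lam ((E ∘ ⇑σ) t)) = ∑ t, lam (E (σ t)) := rfl
        _ = ∑ t, lam (E t) := h3
        _ = ∑ i ∈ Finset.image E Finset.univ, lam i := h4
        _ = ∑ i ∈ s, lam i := by rw [himg]
    rw [Finset.sum_congr rfl fun σ _ => h2 σ, Finset.sum_const, Finset.card_univ,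
      Fintype.card_perm, Fintype.card_fin, nsmul_eq_mul]

end Stmt14

open Stmt14 in
set_option maxHeartbeats 1000000 in
/-- Reformulation of the Hessian condition in property `(P_q)` (here `q = q' + 1`):
for an `n×n` Hermitian matrix `A`, one has
`∑'_{|K|=q-1} ∑_{j,k} A_{jk} w_{jK} conj(w_{kK}) ≥ c ∑'_{|J|=q} |w_J|²`
for all alternating coefficient arrays `w` if and only if the sum of the `q` smallest
eigenvalues of `A` (equivalently, of any `q` eigenvalues) is at least `c`. -/
theorem stmt14 {n q' : ℕ} (hq : q' + 1 ≤ n)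
    (A : Matrix (Fin n) (Fin n) ℂ) (hA : A.IsHermitian) (c : ℝ) :
    (∀ w : (Fin (q' + 1) → Fin n) → ℂ,
      (∀ (J : Fin (q' + 1) → Fin n) (σ : Equiv.Perm (Fin (q' + 1))),
        w (J ∘ σ) = ((Equiv.Perm.sign σ : ℤ) : ℂ) * w J) →
      (∀ J : Fin (q' + 1) → Fin n, ¬ Function.Injective J → w J = 0) →
      c * ∑ J ∈ Finset.univ.filter (fun J : Fin (q' + 1) → Fin n => StrictMono J),
            Complex.normSq (w J)
        ≤ (∑ K ∈ Finset.univ.filter (fun K : Fin q' → Fin n => StrictMono K),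
            ∑ j, ∑ k, A j k * w (Fin.cons j K) * (starRingEnd ℂ) (w (Fin.cons k K))).re) ↔
    (∀ s : Finset (Fin n), s.card = q' + 1 → c ≤ ∑ i ∈ s, hA.eigenvalues i) := by
  have hUmem := hA.eigenvectorUnitary.2
  set U : Matrix (Fin n) (Fin n) ℂ := (hA.eigenvectorUnitary : Matrix (Fin n) (Fin n) ℂ)
    with hUdef
  have hUU : U * star U = 1 := Matrix.mem_unitaryGroup_iff.mp hUmem
  have hUU' : star U * U = 1 := Matrix.mem_unitaryGroup_iff'.mp hUmem
  set lam : Fin n → ℝ := hA.eigenvalues with hlam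
  have hAe : ∀ a b, A a b = ∑ m, U a m * ((lam m : ℝ) : ℂ) * (starRingEnd ℂ) (U b m) := by
    intro a b
    conv_lhs => rw [hA.spectral_theorem, Unitary.conjStarAlgAut_apply]
    rw [← hUdef]
    simp only [Matrix.mul_apply, Matrix.mul_diagonal, Matrix.star_apply, Function.comp_apply]
    refine Finset.sum_congr rfl fun m _ => ?_
    have hd : (∑ j, U a j * Matrix.diagonal (RCLike.ofReal ∘ hA.eigenvalues) j m)
        = U a m * ((lam m : ℝ) : ℂ) := by
      rw [Finset.sum_eq_single m]
      · simp [Matrix.diagonal_apply_eq, Function.comp, hlam]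
      · intro j _ hj
        rw [Matrix.diagonal_apply_ne _ hj, mul_zero]
      · intro hm; exact absurd (Finset.mem_univ m) hm
    rw [hd]
    rfl
  have bridge : ∀ w : (Fin (q' + 1) → Fin n) → ℂ, Alt w →
      ((c * ∑ J ∈ Finset.univ.filter (fun J : Fin (q' + 1) → Fin n => StrictMono J),
            Complex.normSq (w J)
        ≤ (∑ K ∈ Finset.univ.filter (fun K : Fin q' → Fin n => StrictMono K),
            ∑ j, ∑ k, A j k * w (Fin.cons j K) * (starRingEnd ℂ) (w (Fin.cons k K))).re)
      ↔ (c * ∑ M : Fin (q' + 1) → Fin n, Complex.normSq (tr Uᵀ w M)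
          ≤ ∑ M : Fin (q' + 1) → Fin n, (∑ t, lam (M t)) * Complex.normSq (tr Uᵀ w M))) := by
    intro w hw
    have hN : (∑ J : Fin (q' + 1) → Fin n, Complex.normSq (w J))
        = (q' + 1).factorial • ∑ J ∈ Finset.univ.filter
            (fun J : Fin (q' + 1) → Fin n => StrictMono J), Complex.normSq (w J) :=
      sum_factorial _ (fun J σ => by rw [hw.1 J σ, normSq_sign_mul])
        (fun J hJ => by rw [hw.2 J hJ]; simp)
    have hF : (∑ K : Fin q' → Fin n, ∑ j, ∑ k,
          A j k * w (Fin.cons j K) * (starRingEnd ℂ) (w (Fin.cons k K)))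
        = q'.factorial • ∑ K ∈ Finset.univ.filter (fun K : Fin q' → Fin n => StrictMono K),
            ∑ j, ∑ k, A j k * w (Fin.cons j K) * (starRingEnd ℂ) (w (Fin.cons k K)) :=
      sum_factorial _ (fun K σ => inner_symm A hw K σ) (fun K hK => inner_zero A hw K hK)
    have hplan := plancherel U hUU w
    have hkey := key A U lam hUU hAe w
    have hkey_re : (∑ K : Fin q' → Fin n, ∑ j, ∑ k,
          A j k * w (Fin.cons j K) * (starRingEnd ℂ) (w (Fin.cons k K)))
        = ((∑ M : Fin (q' + 1) → Fin n, lam (M 0) * Complex.normSq (tr Uᵀ w M) : ℝ) : ℂ) := by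
      rw [← hkey]
      push_cast
      refine Finset.sum_congr rfl fun M _ => ?_
      rw [Complex.mul_conj]
    have hslot := slot_symm (alt_tr Uᵀ hw) lam
    have hfact_pos : (0:ℝ) < ((q' + 1).factorial : ℝ) := by positivity
    have e5 : (∑ M : Fin (q' + 1) → Fin n, Complex.normSq (tr Uᵀ w M))
        = ((q' + 1).factorial : ℝ) * ∑ J ∈ Finset.univ.filter
            (fun J : Fin (q' + 1) → Fin n => StrictMono J), Complex.normSq (w J) := by
      rw [hplan, hN, nsmul_eq_mul]
    have e7 : (∑ M : Fin (q' + 1) → Fin n, lam (M 0) * Complex.normSq (tr Uᵀ w M))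
        = (∑ K : Fin q' → Fin n, ∑ j, ∑ k,
            A j k * w (Fin.cons j K) * (starRingEnd ℂ) (w (Fin.cons k K))).re := by
      rw [hkey_re, Complex.ofReal_re]
    have e6 : (∑ M : Fin (q' + 1) → Fin n, (∑ t, lam (M t)) * Complex.normSq (tr Uᵀ w M))
        = ((q' + 1).factorial : ℝ) * (∑ K ∈ Finset.univ.filter
            (fun K : Fin q' → Fin n => StrictMono K),
            ∑ j, ∑ k, A j k * w (Fin.cons j K) * (starRingEnd ℂ) (w (Fin.cons k K))).re := by
      rw [hslot, e7, hF, nsmul_eq_mul]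
      have : ((q'.factorial : ℂ) * (∑ K ∈ Finset.univ.filter
          (fun K : Fin q' → Fin n => StrictMono K),
          ∑ j, ∑ k, A j k * w (Fin.cons j K) * (starRingEnd ℂ) (w (Fin.cons k K)))).re
          = (q'.factorial : ℝ) * (∑ K ∈ Finset.univ.filter
          (fun K : Fin q' → Fin n => StrictMono K),
          ∑ j, ∑ k, A j k * w (Fin.cons j K) * (starRingEnd ℂ) (w (Fin.cons k K))).re := by
        simp [Complex.mul_re]
      rw [this, Nat.factorial_succ]
      push_cast
      ring
    rw [e5, e6]
    rw [show c * (((q' + 1).factorial : ℝ) * ∑ J ∈ Finset.univ.filter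
          (fun J : Fin (q' + 1) → Fin n => StrictMono J), Complex.normSq (w J))
        = ((q' + 1).factorial : ℝ) * (c * ∑ J ∈ Finset.univ.filter
          (fun J : Fin (q' + 1) → Fin n => StrictMono J), Complex.normSq (w J)) by ring]
    exact (mul_le_mul_iff_right₀ hfact_pos).symm
  constructor
  · intro h s hs
    obtain ⟨v, hvAlt, hv1, hv2⟩ := exists_alt s hs lam
    have hwAlt : Alt (tr ((star U)ᵀ) v) := alt_tr _ hvAlt
    have hvw : tr Uᵀ (tr ((star U)ᵀ) v) = v := by
      rw [tr_tr, ← Matrix.transpose_mul, hUU', Matrix.transpose_one, tr_one]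
    have h2 := (bridge _ hwAlt).mp (h _ hwAlt.1 hwAlt.2)
    rw [hvw, hv1, hv2] at h2
    have h3 : ((q' + 1).factorial : ℝ) * c ≤ ((q' + 1).factorial : ℝ) * ∑ i ∈ s, lam i := by
      linarith [h2]
    exact le_of_mul_le_mul_left h3 (by positivity)
  · intro h w h1 h2
    have hwAlt : Alt w := ⟨h1, h2⟩
    refine (bridge w hwAlt).mpr ?_
    rw [Finset.mul_sum]
    refine Finset.sum_le_sum fun M _ => ?_
    rcases eq_or_ne (tr Uᵀ w M) 0 with h0 | h0
    · rw [h0]; simp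
    have hMinj : Function.Injective M := by
      by_contra hni
      exact h0 ((alt_tr Uᵀ hwAlt).2 M hni)
    have hcard : (Finset.image M Finset.univ).card = q' + 1 := by
      rw [Finset.card_image_of_injective _ hMinj, Finset.card_univ, Fintype.card_fin]
    have hsum : (∑ t, lam (M t)) = ∑ i ∈ Finset.image M Finset.univ, lam i :=
      (Finset.sum_image (fun a _ b _ hab => hMinj hab)).symm
    have hle := h _ hcard
    calc c * Complex.normSq (tr Uᵀ w M)
        ≤ (∑ i ∈ Finset.image M Finset.univ, lam i) * Complex.normSq (tr Uᵀ w M) :=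
          mul_le_mul_of_nonneg_right hle (Complex.normSq_nonneg _)
      _ = (∑ t, lam (M t)) * Complex.normSq (tr Uᵀ w M) := by rw [hsum]
end
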